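/- For N ≥ 3 and α > 0, set p_α = (N+2+2α)/(N-2) and C_α = 1/((N-2)(N+α)). Then the function U(x) = (1 + C_α |x|^{2+α})^{-(N-2)/(2+α)} satisfies -ΔU = |x|^α U^{p_α} in ℝ^N, with U(0) = 1 and 0 < U ≤ 1. -/

import Mathlib

open Set


noncomputable def Hf (C m b t : ℝ) : ℝ := (1 + C * t ^ b) ^ (-m)
noncomputable def Hf1 (C m b t : ℝ) : ℝ :=
  -(m * C * b) * (t ^ (b - 1) * (1 + C * t ^ b) ^ (-m - 1))
noncomputable def Hf2 (C m b t : ℝ) : ℝ :=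
  -(m * C * b) * ((b - 1) * t ^ (b - 2) * (1 + C * t ^ b) ^ (-m - 1)
    + t ^ (b - 1) * (C * (b * t ^ (b - 1)) * (-m - 1) * (1 + C * t ^ b) ^ (-m - 2)))

lemma base_pos {C b : ℝ} (hC : 0 < C) {t : ℝ} (ht : 0 ≤ t) : 0 < 1 + C * t ^ b := by
  nlinarith [Real.rpow_nonneg ht b]

lemma hasDerivAt_Hf {C m b : ℝ} (hC : 0 < C) (hb : 1 ≤ b) {t : ℝ} (ht : 0 ≤ t) :
    HasDerivAt (Hf C m b) (Hf1 C m b t) t := by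
  have hinner : HasDerivAt (fun t : ℝ => 1 + C * t ^ b) (C * (b * t ^ (b - 1))) t :=
    by simpa using ((Real.hasDerivAt_rpow_const (Or.inr hb)).const_mul C).const_add (1:ℝ)
  have h := hinner.rpow_const (p := -m) (Or.inl (base_pos hC ht).ne')
  unfold Hf Hf1
  convert h using 1
  ring

lemma hasDerivAt_Hf1 {C m b : ℝ} (hC : 0 < C) (hb : 1 ≤ b) {t : ℝ} (ht : 0 < t) :
    HasDerivAt (Hf1 C m b) (Hf2 C m b t) t := by
  have hf : HasDerivAt (fun t : ℝ => t ^ (b - 1)) ((b - 1) * t ^ (b - 1 - 1)) t :=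
    Real.hasDerivAt_rpow_const (Or.inl ht.ne')
  have hinner : HasDerivAt (fun t : ℝ => 1 + C * t ^ b) (C * (b * t ^ (b - 1))) t :=
    by simpa using ((Real.hasDerivAt_rpow_const (Or.inr hb)).const_mul C).const_add (1:ℝ)
  have hg := hinner.rpow_const (p := -m - 1) (Or.inl (base_pos hC ht.le).ne')
  have h := (hf.mul hg).const_mul (-(m * C * b))
  simp only [show b - 1 - 1 = b - 2 from by ring, show -m - 1 - 1 = -m - 2 from by ring] at h
  unfold Hf1 Hf2
  exact h

lemma Hf1_bound {C m b : ℝ} (hC : 0 < C) (hm : 0 < m) (hb : 1 ≤ b) {t : ℝ} (ht : 0 ≤ t) :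
    |Hf1 C m b t| ≤ m * C * b * t ^ (b - 1) := by
  have hw : (1:ℝ) ≤ 1 + C * t ^ b := by nlinarith [Real.rpow_nonneg ht b]
  have h1 : (1 + C * t ^ b) ^ (-m - 1) ≤ 1 :=
    Real.rpow_le_one_of_one_le_of_nonpos hw (by linarith)
  have h0 : 0 ≤ (1 + C * t ^ b) ^ (-m - 1) := Real.rpow_nonneg (by linarith) _
  have ht' : 0 ≤ t ^ (b - 1) := Real.rpow_nonneg ht _
  unfold Hf1
  rw [abs_mul, abs_neg, abs_of_nonneg (by positivity : (0:ℝ) ≤ m * C * b),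
    abs_of_nonneg (mul_nonneg ht' h0)]
  exact mul_le_mul_of_nonneg_left (mul_le_of_le_one_right ht' h1) (by positivity)

lemma key_identity {n a s : ℝ} (hn : 2 < n) (ha : 0 < a) (hs : 0 < s) :
    -(4 * s * Hf2 (1/((n-2)*(n+a))) ((n-2)/(2+a)) ((2+a)/2) s
      + 2 * n * Hf1 (1/((n-2)*(n+a))) ((n-2)/(2+a)) ((2+a)/2) s)
    = s ^ ((2+a)/2 - 1) * (1 + (1/((n-2)*(n+a))) * s ^ ((2+a)/2)) ^ (-((n-2)/(2+a)) - 2) := by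
  set C : ℝ := 1/((n-2)*(n+a)) with hCd
  set m : ℝ := (n-2)/(2+a) with hmd
  set b : ℝ := (2+a)/2 with hbd
  have hn2 : (0:ℝ) < n - 2 := by linarith
  have hna : (0:ℝ) < n + a := by linarith
  have h2a : (0:ℝ) < 2 + a := by linarith
  have hC : 0 < C := by rw [hCd]; positivity
  have hw : 0 < 1 + C * s ^ b := base_pos hC hs.le
  have e1 : s ^ (b - 2) = s ^ (b - 1) / s := by
    rw [eq_div_iff hs.ne', ← Real.rpow_add_one hs.ne']
    congr 1; ring
  have e3 : (1 + C * s ^ b) ^ (-m - 1) = (1 + C * s ^ b) ^ (-m - 2) * (1 + C * s ^ b) := by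
    rw [← Real.rpow_add_one hw.ne']
    congr 1; ring
  unfold Hf1 Hf2
  rw [e1, e3]
  set S : ℝ := s ^ (b - 1) with hSd
  set W : ℝ := (1 + C * s ^ b) ^ (-m - 2) with hWd
  have e2 : s ^ b = S * s := by
    rw [hSd, ← Real.rpow_add_one hs.ne']
    congr 1; ring
  rw [e2, hCd, hmd, hbd]
  field_simp
  ring

/-- The Laplacian of `f : ℝ^N → ℝ`, as the sum of pure second derivatives. -/
noncomputable def lap {N : ℕ} (f : EuclideanSpace ℝ (Fin N) → ℝ)
    (x : EuclideanSpace ℝ (Fin N)) : ℝ :=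
  ∑ i, iteratedFDeriv ℝ 2 f x ![EuclideanSpace.single i 1, EuclideanSpace.single i 1]

set_option maxHeartbeats 2000000 in
theorem stmt_3 (N : ℕ) (hN : 3 ≤ N) (α : ℝ) (hα : 0 < α) :
    let pα : ℝ := ((N : ℝ) + 2 + 2 * α) / ((N : ℝ) - 2)
    let Cα : ℝ := 1 / (((N : ℝ) - 2) * ((N : ℝ) + α))
    let U : EuclideanSpace ℝ (Fin N) → ℝ :=
      fun x => (1 + Cα * ‖x‖ ^ (2 + α)) ^ (-((N : ℝ) - 2) / (2 + α))
    (∀ x, -(lap U x) = ‖x‖ ^ α * U x ^ pα) ∧ U 0 = 1 ∧ ∀ x, 0 < U x ∧ U x ≤ 1 := by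
  intro pα Cα U
  have hN3 : (3:ℝ) ≤ (N:ℝ) := by exact_mod_cast hN
  have h2a : (0:ℝ) < 2 + α := by linarith
  have hn2 : (2:ℝ) < (N:ℝ) := by linarith
  set m : ℝ := ((N:ℝ) - 2) / (2 + α) with hmdef
  set b : ℝ := (2 + α) / 2 with hbdef
  have hCα : Cα = 1 / (((N:ℝ) - 2) * ((N:ℝ) + α)) := rfl
  have hC : 0 < Cα := by
    rw [hCα]
    have h1 : (0:ℝ) < (N:ℝ) - 2 := by linarith
    have h2 : (0:ℝ) < (N:ℝ) + α := by linarith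
    positivity
  have hb1 : (1:ℝ) < b := by rw [hbdef]; linarith
  have hm : 0 < m := by rw [hmdef]; exact div_pos (by linarith) h2a
  -- norm exponent facts
  have hnorm : ∀ y : EuclideanSpace ℝ (Fin N), ((‖y‖:ℝ) ^ 2) ^ b = ‖y‖ ^ (2 + α) := by
    intro y
    rw [← Real.rpow_natCast ‖y‖ 2, ← Real.rpow_mul (norm_nonneg y)]
    congr 1
    rw [hbdef]; push_cast; ring
  have hnorm' : ∀ y : EuclideanSpace ℝ (Fin N), ((‖y‖:ℝ) ^ 2) ^ (b - 1) = ‖y‖ ^ α := by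
    intro y
    rw [← Real.rpow_natCast ‖y‖ 2, ← Real.rpow_mul (norm_nonneg y)]
    congr 1
    rw [hbdef]; push_cast; ring
  have hUeq : U = fun y => Hf Cα m b (‖y‖ ^ 2) := by
    funext y
    simp only [U, Hf, hnorm y]
    rw [hmdef, neg_div]
  -- first derivative
  have hq : ∀ y : EuclideanSpace ℝ (Fin N),
      HasFDerivAt (fun z : EuclideanSpace ℝ (Fin N) => ‖z‖ ^ 2) ((2:ℝ) • innerSL ℝ y) y := by
    intro y
    have h := (hasStrictFDerivAt_norm_sq y).hasFDerivAt
    rw [← Nat.cast_smul_eq_nsmul ℝ] at h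
    simpa only [Nat.cast_ofNat] using h
  have hUF : ∀ y, HasFDerivAt U (Hf1 Cα m b (‖y‖ ^ 2) • ((2:ℝ) • innerSL ℝ y)) y := by
    intro y
    rw [hUeq]
    exact (hasDerivAt_Hf hC hb1.le (by positivity)).comp_hasFDerivAt y (hq y)
  have hfderiv : ∀ y, fderiv ℝ U y = Hf1 Cα m b (‖y‖ ^ 2) • ((2:ℝ) • innerSL ℝ y) :=
    fun y => (hUF y).fderiv
  -- Part 2
  have hU0 : U 0 = 1 := by
    simp only [U, norm_zero, Real.zero_rpow h2a.ne', mul_zero, add_zero, Real.one_rpow]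
  -- Part 3
  have hbounds : ∀ x : EuclideanSpace ℝ (Fin N), 0 < U x ∧ U x ≤ 1 := by
    intro x
    have hw : 0 < 1 + Cα * ‖x‖ ^ (2 + α) := by
      have := Real.rpow_nonneg (norm_nonneg x) (2 + α)
      nlinarith
    constructor
    · exact Real.rpow_pos_of_pos hw _
    · apply Real.rpow_le_one_of_one_le_of_nonpos
      · have := Real.rpow_nonneg (norm_nonneg x) (2 + α)
        nlinarith
      · apply div_nonpos_of_nonpos_of_nonneg <;> linarith
  refine ⟨?_, hU0, hbounds⟩
  intro x
  by_cases hx : x = 0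
  · -- x = 0
    subst hx
    have hfd0 : fderiv ℝ U 0 = 0 := by
      rw [hfderiv 0]
      have : Hf1 Cα m b (‖(0:EuclideanSpace ℝ (Fin N))‖ ^ 2) = 0 := by
        have h02 : ((0:ℝ) ^ 2 : ℝ) = 0 := by norm_num
        rw [norm_zero, h02]
        unfold Hf1
        rw [Real.zero_rpow (by linarith : b - 1 ≠ 0)]
        ring
      rw [this, zero_smul]
    have hF0 : HasFDerivAt (fderiv ℝ U) (0 : EuclideanSpace ℝ (Fin N) →L[ℝ]
        (EuclideanSpace ℝ (Fin N) →L[ℝ] ℝ)) 0 := by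
      rw [hasFDerivAt_iff_isLittleO_nhds_zero]
      simp only [hfd0, zero_add, sub_zero, ContinuousLinearMap.zero_apply]
      rw [Asymptotics.isLittleO_iff]
      intro c hc
      have h1 : Filter.Tendsto (fun y : EuclideanSpace ℝ (Fin N) => ‖y‖) (nhds 0) (nhds 0) := by
        simpa using (continuous_norm (E := EuclideanSpace ℝ (Fin N))).tendsto 0
      have h2 : Filter.Tendsto (fun y : EuclideanSpace ℝ (Fin N) =>
          2 * (m * Cα * b) * ‖y‖ ^ α) (nhds 0) (nhds (2 * (m * Cα * b) * (0:ℝ) ^ α)) :=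
        (((Real.continuousAt_rpow_const 0 α (Or.inr hα.le)).tendsto).comp h1).const_mul _
      rw [Real.zero_rpow hα.ne', mul_zero] at h2
      filter_upwards [h2.eventually (gt_mem_nhds hc)] with y hy
      have hb0 : ‖fderiv ℝ U y‖ ≤ (2 * (m * Cα * b) * ‖y‖ ^ α) * ‖y‖ := by
        rw [hfderiv y, norm_smul, norm_smul, innerSL_apply_norm, Real.norm_eq_abs]
        have h2n : ‖(2:ℝ)‖ = 2 := by norm_num
        rw [h2n]
        have hbd := Hf1_bound hC hm hb1.le (by positivity : (0:ℝ) ≤ ‖y‖ ^ 2)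
        rw [hnorm' y] at hbd
        nlinarith [norm_nonneg y, abs_nonneg (Hf1 Cα m b (‖y‖ ^ 2)),
          mul_le_mul_of_nonneg_right hbd (by positivity : (0:ℝ) ≤ 2 * ‖y‖)]
      calc ‖fderiv ℝ U y‖ ≤ (2 * (m * Cα * b) * ‖y‖ ^ α) * ‖y‖ := hb0
        _ ≤ c * ‖y‖ := mul_le_mul_of_nonneg_right hy.le (norm_nonneg y)
    have hsnd : fderiv ℝ (fderiv ℝ U) 0 = 0 := hF0.fderiv
    have hlap0 : lap U 0 = 0 := by
      unfold lap
      apply Finset.sum_eq_zero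
      intro i _
      rw [iteratedFDeriv_two_apply]
      simp [hsnd]
    rw [hlap0, norm_zero, Real.zero_rpow hα.ne', neg_zero, zero_mul]
  · -- x ≠ 0
    have hxn : 0 < ‖x‖ := norm_pos_iff.mpr hx
    have hs : 0 < ‖x‖ ^ 2 := by positivity
    set s : ℝ := ‖x‖ ^ 2 with hsdef
    -- second-order differentiability
    have hUcd : ContDiffAt ℝ 2 U x := by
      rw [hUeq]
      have hwne : (1 + Cα * s ^ b) ≠ 0 := (base_pos hC hs.le).ne'
      have hi : ContDiffAt ℝ 2 (fun t : ℝ => 1 + Cα * t ^ b) s :=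
        contDiffAt_const.add (contDiffAt_const.mul
          (Real.contDiffAt_rpow_const_of_ne hs.ne'))
      have hsc : ContDiffAt ℝ 2 (Hf Cα m b) s := by
        unfold Hf
        exact (Real.contDiffAt_rpow_const_of_ne hwne).comp s hi
      exact hsc.comp x (contDiff_norm_sq ℝ).contDiffAt
    have hdF : DifferentiableAt ℝ (fderiv ℝ U) x :=
      (hUcd.fderiv_right (m := 1) (by norm_num)).differentiableAt one_ne_zero
    -- second derivative evaluated on coordinate directions
    have hterm : ∀ i, iteratedFDeriv ℝ 2 U x
        ![EuclideanSpace.single i 1, EuclideanSpace.single i 1]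
        = 2 * Hf1 Cα m b s + 4 * Hf2 Cα m b s * (x i) ^ 2 := by
      intro i
      set v : EuclideanSpace ℝ (Fin N) := EuclideanSpace.single i 1 with hvdef
      have happ : (fun y => (fderiv ℝ U) y v)
          = fun y => Hf1 Cα m b (‖y‖ ^ 2) * (2 * (inner ℝ v y : ℝ)) := by
        funext y
        rw [hfderiv y]
        simp only [ContinuousLinearMap.smul_apply, innerSL_apply_apply, smul_eq_mul]
        try rw [real_inner_comm]
        try ring
      have hc2 : HasFDerivAt (fun y : EuclideanSpace ℝ (Fin N) => Hf1 Cα m b (‖y‖ ^ 2))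
          (Hf2 Cα m b s • ((2:ℝ) • innerSL ℝ x)) x :=
        (hasDerivAt_Hf1 (m := m) hC hb1.le hs).comp_hasFDerivAt (h₂ := Hf1 Cα m b) x (hq x)
      have hg2 : HasFDerivAt (fun y : EuclideanSpace ℝ (Fin N) => 2 * (inner ℝ v y : ℝ))
          ((2:ℝ) • innerSL ℝ v) x := by
        have := ((innerSL ℝ v).hasFDerivAt (x := x)).const_mul (2:ℝ)
        simpa using this
      have hmul := hc2.mul hg2
      rw [iteratedFDeriv_two_apply]
      have hcl : fderiv ℝ (fderiv ℝ U) x v v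
          = fderiv ℝ (fun y => (fderiv ℝ U) y v) x v := by
        rw [fderiv_clm_apply hdF (differentiableAt_const v)]
        try simp
      simp only [Matrix.cons_val_zero, Matrix.cons_val_one, Matrix.head_cons]
      have h5 : HasFDerivAt (fun y => (fderiv ℝ U) y v)
          (Hf1 Cα m b (‖x‖ ^ 2) • (2:ℝ) • innerSL ℝ v
            + (2 * (inner ℝ v x : ℝ)) • Hf2 Cα m b s • (2:ℝ) • innerSL ℝ x) x := by
        rw [happ]; exact hmul
      rw [hcl, h5.fderiv]
      have hvv : (inner ℝ v v : ℝ) = 1 := by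
        simp [hvdef, EuclideanSpace.inner_single_left, EuclideanSpace.single_apply]
      have hvx : (inner ℝ v x : ℝ) = x i := by
        simp [hvdef, EuclideanSpace.inner_single_left]
      have hxv : (inner ℝ x v : ℝ) = x i := by
        rw [real_inner_comm]; exact hvx
      simp only [ContinuousLinearMap.add_apply, ContinuousLinearMap.smul_apply,
        innerSL_apply_apply, smul_eq_mul, hvv, hvx, hxv]
      rw [← hsdef]
      ring
    have hsum : ∑ i, (x i) ^ 2 = s := by
      rw [hsdef, EuclideanSpace.norm_sq_eq]
      simp [Real.norm_eq_abs, sq_abs]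
    have hlap : lap U x = 2 * (N:ℝ) * Hf1 Cα m b s + 4 * Hf2 Cα m b s * s := by
      unfold lap
      rw [Finset.sum_congr rfl fun i _ => hterm i]
      rw [Finset.sum_add_distrib, Finset.sum_const, ← Finset.mul_sum, hsum]
      simp [Finset.card_univ]
      ring
    -- RHS computation
    have hwpos : 0 < 1 + Cα * s ^ b := base_pos hC hs.le
    have hxα : ‖x‖ ^ α = s ^ (b - 1) := (hnorm' x).symm
    have hUxp : U x ^ pα = (1 + Cα * s ^ b) ^ (-m - 2) := by
      have hUx : U x = (1 + Cα * s ^ b) ^ (-m) := by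
        rw [hUeq]; rfl
      rw [hUx, ← Real.rpow_mul hwpos.le]
      congr 1
      rw [hmdef]
      simp only [pα]
      have hne : ((N:ℝ) - 2) ≠ 0 := by linarith
      field_simp
      ring
    rw [hlap, hxα, hUxp]
    have := key_identity (n := (N:ℝ)) (a := α) hn2 hα hs
    rw [← hCα, ← hmdef, ← hbdef] at this
    calc -(2 * (N:ℝ) * Hf1 Cα m b s + 4 * Hf2 Cα m b s * s)
        = -(4 * s * Hf2 Cα m b s + 2 * (N:ℝ) * Hf1 Cα m b s) := by ring
      _ = s ^ (b - 1) * (1 + Cα * s ^ b) ^ (-m - 2) := this
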